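/- Let r ≥ 2 and d ≥ 1 be integers and let n be an integer with n ≥ (r−1)d. For every family of points p : {0,…,n} × (ℤ/rℤ) → ℝ^d there exist weights λ : {0,…,n} → ℝ with λ ≥ 0 and ∑_i λ_i = 1, and a function g : {0,…,n} → ℤ/rℤ such that for all s, t ∈ ℤ/rℤ, ∑_{i=0}^{n} λ_i · p(i, g(i)+s) = ∑_{i=0}^{n} λ_i · p(i, g(i)+t). That is, every affine map [r]^{*(n+1)} → ℝ^d collapses some ℤ/r-orbit of [r]^{*(n+1)} to a single point. -/

import Mathlib

open Finset Module

variable {E : Type*} [NormedAddCommGroup E] [InnerProductSpace ℝ E] [FiniteDimensional ℝ E]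

lemma aux_card_le {x : E} (hx : x ≠ 0) {t : Finset E}
    (ht : AffineIndependent ℝ ((↑) : t → E))
    (htH : ∀ y ∈ t, inner ℝ x y = ‖x‖ ^ 2) : t.card ≤ finrank ℝ E := by
  classical
  have hfin : 1 ≤ finrank ℝ E := Module.finrank_pos_iff.mpr (nontrivial_of_ne x 0 hx)
  have h1 := ht.card_le_finrank_succ
  rw [Fintype.card_coe] at h1
  -- vectorSpan of ↑t lies in the kernel of the functional ⟪x, ·⟫
  set φ : E →ₗ[ℝ] ℝ := (innerSL ℝ x : E →L[ℝ] ℝ).toLinearMap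
  have hφ : φ ≠ 0 := by
    intro h
    apply hx
    have := congrArg (fun ψ : E →ₗ[ℝ] ℝ => ψ x) h
    simp [φ, real_inner_self_eq_norm_sq] at this
    simpa [pow_eq_zero_iff] using this
  have hker : vectorSpan ℝ (Set.range ((↑) : t → E)) ≤ LinearMap.ker φ := by
    rw [vectorSpan_def, Submodule.span_le]
    rintro v ⟨y₁, ⟨⟨y₁', hy₁⟩, rfl⟩, y₂, ⟨⟨y₂', hy₂⟩, rfl⟩, rfl⟩
    simp only [SetLike.mem_coe, LinearMap.mem_ker, vsub_eq_sub, map_sub]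
    have e1 : (inner ℝ x y₁' : ℝ) = ‖x‖ ^ 2 := htH _ hy₁
    have e2 : (inner ℝ x y₂' : ℝ) = ‖x‖ ^ 2 := htH _ hy₂
    simp only [φ, ContinuousLinearMap.coe_coe, innerSL_apply_apply, e1, e2, sub_self]
  have hkerrank : finrank ℝ (LinearMap.ker φ) + 1 = finrank ℝ E :=
    Module.Dual.finrank_ker_add_one_of_ne_zero hφ
  have h2 : finrank ℝ (vectorSpan ℝ (Set.range ((↑) : t → E))) ≤ finrank ℝ (LinearMap.ker φ) :=
    Submodule.finrank_mono hker
  omega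

lemma colorful_caratheodory {ι : Type*} [Fintype ι]
    (hcard : finrank ℝ E < Fintype.card ι) (C : ι → Finset E)
    (hC : ∀ i, (0 : E) ∈ convexHull ℝ (C i : Set E)) :
    ∃ f : ι → E, (∀ i, f i ∈ C i) ∧ (0 : E) ∈ convexHull ℝ (Set.range f) := by
  classical
  have hιne : Nonempty ι := Fintype.card_pos_iff.mp (lt_of_le_of_lt (Nat.zero_le _) hcard)
  have hne : ∀ i, (C i).Nonempty := by
    intro i
    rw [← Finset.coe_nonempty, ← convexHull_nonempty_iff (𝕜 := ℝ)]
    exact ⟨0, hC i⟩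
  -- the space of selections
  let S := ∀ i, {y : E // y ∈ C i}
  have hSne : Nonempty S := ⟨fun i => ⟨(hne i).choose, (hne i).choose_spec⟩⟩
  let K : S → Set E := fun σ => convexHull ℝ (Set.range fun i => (σ i : E))
  have hKcomp : ∀ σ, IsCompact (K σ) := fun σ =>
    (Set.finite_range _).isCompact_convexHull ℝ
  have hKne : ∀ σ, (K σ).Nonempty := fun σ =>
    (Set.range_nonempty _).convexHull
  have hKconv : ∀ σ, Convex ℝ (K σ) := fun σ => convex_convexHull ℝ _
  let D : S → ℝ := fun σ => Metric.infDist 0 (K σ)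
  obtain ⟨σ, -, hσmin⟩ := Finset.exists_min_image (Finset.univ : Finset S) D
    ⟨Classical.arbitrary S, Finset.mem_univ _⟩
  obtain ⟨x, hxK, hxmin'⟩ := (hKcomp σ).exists_isMinOn (hKne σ) continuous_norm.continuousOn
  have hxmin : ∀ y ∈ K σ, ‖x‖ ≤ ‖y‖ := fun y hy => hxmin' hy
  by_cases hx : x = 0
  · exact ⟨fun i => (σ i : E), fun i => (σ i).2, hx ▸ hxK⟩
  exfalso
  -- D σ = ‖x‖
  have hD : D σ = ‖x‖ := by
    apply le_antisymm
    · have h := Metric.infDist_le_dist_of_mem (x := (0:E)) hxK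
      simpa [D] using h
    · show ‖x‖ ≤ Metric.infDist 0 (K σ)
      rw [Metric.infDist_eq_iInf]
      haveI : Nonempty (K σ) := ⟨⟨x, hxK⟩⟩
      apply le_ciInf
      intro w
      simpa using hxmin w w.2
  -- variational inequality
  have hvar : ∀ w ∈ K σ, ‖x‖ ^ 2 ≤ inner ℝ x w := by
    haveI : Nonempty (K σ) := ⟨⟨x, hxK⟩⟩
    have hiInf : ‖(0 : E) - x‖ = ⨅ w : K σ, ‖(0 : E) - w‖ := by
      apply le_antisymm
      · apply le_ciInf
        intro w
        simpa [norm_sub_rev, zero_sub, norm_neg] using hxmin w w.2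
      · exact ciInf_le ⟨0, by rintro a ⟨w, rfl⟩; positivity⟩ (⟨x, hxK⟩ : K σ)
    have := (norm_eq_iInf_iff_real_inner_le_zero (hKconv σ) hxK).mp hiInf
    intro w hw
    have h2 := this w hw
    have : inner ℝ ((0 : E) - x) (w - x) = -(inner ℝ x w) + ‖x‖^2 := by
      rw [zero_sub, inner_sub_right, inner_neg_left, inner_neg_left,
        real_inner_self_eq_norm_sq]
      ring
    rw [this] at h2
    linarith
  -- point representation
  have hT : K σ = convexHull ℝ ((Finset.univ.image fun i => (σ i : E)) : Set E) := by
    rw [Finset.coe_image, Finset.coe_univ, Set.image_univ]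
  set T : Finset E := Finset.univ.image fun i => (σ i : E) with hTdef
  rw [hT, Finset.convexHull_eq] at hxK
  obtain ⟨w, hw0, hw1, hwcm⟩ := hxK
  -- support lies in the hyperplane
  have hTK : ∀ y ∈ T, y ∈ K σ := by
    intro y hy
    rw [hT]
    exact subset_convexHull ℝ _ hy
  have hsupp : ∀ y ∈ T, w y ≠ 0 → (inner ℝ x y : ℝ) = ‖x‖ ^ 2 := by
    have hsum0 : ∑ y ∈ T, w y * ((inner ℝ x y : ℝ) - ‖x‖ ^ 2) = 0 := by
      have hxx : (inner ℝ x x : ℝ) = ‖x‖ ^ 2 := real_inner_self_eq_norm_sq x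
      have hcm : ∑ y ∈ T, w y • y = x := by
        rwa [Finset.centerMass_eq_of_sum_1 _ _ hw1] at hwcm
      have : (inner ℝ x (∑ y ∈ T, w y • y) : ℝ) = ‖x‖ ^ 2 := by rw [hcm, hxx]
      rw [inner_sum] at this
      simp only [real_inner_smul_right] at this
      simp only [mul_sub, Finset.sum_sub_distrib, this, ← Finset.sum_mul, hw1]
      ring
    intro y hy hwy
    have hterm : ∀ z ∈ T, 0 ≤ w z * ((inner ℝ x z : ℝ) - ‖x‖ ^ 2) := by
      intro z hz
      have := hvar z (hTK z hz)
      have := hw0 z hz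
      nlinarith
    have := (Finset.sum_eq_zero_iff_of_nonneg hterm).mp hsum0 y hy
    rcases mul_eq_zero.mp this with h | h
    · exact absurd h hwy
    · linarith
  -- x lies in hull of points in the hyperplane, apply Caratheodory
  set T'' : Finset E := T.filter (fun y => w y ≠ 0) with hT''
  have hxT'' : x ∈ convexHull ℝ (T'' : Set E) := by
    rw [Finset.convexHull_eq]
    refine ⟨w, fun y hy => hw0 y (Finset.filter_subset _ _ hy), ?_, ?_⟩
    · rw [hT'', Finset.sum_filter_ne_zero, hw1]
    · rw [hT'', Finset.centerMass_filter_ne_zero, hwcm]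
  rw [convexHull_eq_union] at hxT''
  simp only [Set.mem_iUnion] at hxT''
  obtain ⟨t, htsub, htai, hxt⟩ := hxT''
  have htT : ∀ y ∈ t, y ∈ T ∧ w y ≠ 0 := by
    intro y hy
    have := htsub hy
    rw [hT'', Finset.coe_filter] at this
    exact ⟨this.1, this.2⟩
  have htcard : t.card ≤ finrank ℝ E :=
    aux_card_le hx htai (fun y hy => hsupp y (htT y hy).1 (htT y hy).2)
  -- find a free index
  let sec : E → ι := Function.invFun (fun i => (σ i : E))
  have hsec : ∀ y ∈ T, (σ (sec y) : E) = y := by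
    intro y hy
    rw [hTdef, Finset.mem_image] at hy
    obtain ⟨i, -, hi⟩ := hy
    exact Function.invFun_eq (f := fun i => (σ i : E)) ⟨i, hi⟩
  set I : Finset ι := t.image sec with hI
  have hIcard : I.card < Fintype.card ι :=
    lt_of_le_of_lt (le_trans (Finset.card_image_le) htcard) hcard
  have : ∃ i₀, i₀ ∉ I := by
    by_contra h
    push_neg at h
    have : (Finset.univ : Finset ι) ⊆ I := fun i _ => h i
    have := Finset.card_le_card this
    rw [Finset.card_univ] at this
    omega
  obtain ⟨i₀, hi₀⟩ := this
  -- pick a point of C i₀ on the other side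
  have hz : ∃ z ∈ C i₀, (inner ℝ x z : ℝ) ≤ 0 := by
    by_contra h
    push_neg at h
    have h0mem := hC i₀
    rw [Finset.convexHull_eq] at h0mem
    obtain ⟨v, hv0, hv1, hvcm⟩ := h0mem
    have hcm : ∑ z ∈ C i₀, v z • z = 0 := by
      rwa [Finset.centerMass_eq_of_sum_1 _ _ hv1] at hvcm
    have h0 : (0:ℝ) = ∑ z ∈ C i₀, v z * (inner ℝ x z : ℝ) := by
      have := congrArg (fun y => (inner ℝ x y : ℝ)) hcm
      simpa [inner_sum, real_inner_smul_right] using this.symm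
    have hterm : ∀ a ∈ C i₀, 0 ≤ v a * (inner ℝ x a : ℝ) :=
      fun a ha => mul_nonneg (hv0 a ha) (le_of_lt (h a ha))
    have hall := (Finset.sum_eq_zero_iff_of_nonneg hterm).mp h0.symm
    have hvz : ∀ z ∈ C i₀, v z = 0 := by
      intro z hzmem
      rcases mul_eq_zero.mp (hall z hzmem) with h' | h'
      · exact h'
      · exact absurd h' (ne_of_gt (h z hzmem))
    rw [Finset.sum_eq_zero hvz] at hv1
    exact one_ne_zero hv1.symm
  obtain ⟨z, hzC, hzneg⟩ := hz
  -- the improved selection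
  let σ' : S := Function.update σ i₀ ⟨z, hzC⟩
  have hxK' : x ∈ K σ' := by
    have hsub : (t : Set E) ⊆ Set.range fun i => (σ' i : E) := by
      intro y hy
      have hyT : y ∈ T := (htT y hy).1
      have hyI : sec y ∈ I := Finset.mem_image_of_mem sec hy
      have hne' : sec y ≠ i₀ := fun h => hi₀ (h ▸ hyI)
      exact ⟨sec y, by simp [σ', Function.update_of_ne hne', hsec y hyT]⟩
    exact convexHull_mono hsub hxt
  have hzK' : z ∈ K σ' := subset_convexHull ℝ _ ⟨i₀, by simp [σ']⟩
  -- the contradiction: a closer point in K σ'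
  have hxzx : (inner ℝ x (z - x) : ℝ) ≤ -‖x‖ ^ 2 := by
    rw [inner_sub_right, real_inner_self_eq_norm_sq]
    linarith
  have hc : (0:ℝ) < ‖z - x‖ ^ 2 := by
    have : z ≠ x := by
      intro h
      rw [h, real_inner_self_eq_norm_sq] at hzneg
      exact hx (by simpa [pow_eq_zero_iff] using le_antisymm hzneg (by positivity))
    have h2 : z - x ≠ 0 := sub_ne_zero.mpr this
    have h3 := norm_pos_iff.mpr h2
    positivity
  set c : ℝ := ‖z - x‖ ^ 2
  set t₀ : ℝ := min 1 (‖x‖ ^ 2 / c)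
  have hx2 : (0:ℝ) < ‖x‖ ^ 2 := by
    have := norm_pos_iff.mpr hx
    positivity
  have ht₀pos : 0 < t₀ := lt_min one_pos (div_pos hx2 hc)
  have ht₀le1 : t₀ ≤ 1 := min_le_left _ _
  have ht₀c : t₀ * c ≤ ‖x‖ ^ 2 := by
    have : t₀ ≤ ‖x‖ ^ 2 / c := min_le_right _ _
    calc t₀ * c ≤ (‖x‖^2 / c) * c := by nlinarith
      _ = ‖x‖ ^ 2 := by field_simp
  set q : E := x + t₀ • (z - x)
  have hqK' : q ∈ K σ' := by
    have : q = (1 - t₀) • x + t₀ • z := by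
      simp only [q, smul_sub, sub_smul, one_smul]
      abel
    rw [this]
    exact hKconv σ' hxK' hzK' (by linarith) (le_of_lt ht₀pos) (by ring)
  have hqnorm : ‖q‖ ^ 2 < ‖x‖ ^ 2 := by
    have hexp : ‖q‖ ^ 2 = ‖x‖ ^ 2 + 2 * (t₀ * inner ℝ x (z - x)) + t₀ ^ 2 * c := by
      rw [show q = x + t₀ • (z - x) from rfl, norm_add_sq_real, real_inner_smul_right,
        norm_smul]
      rw [Real.norm_eq_abs, abs_of_pos ht₀pos, mul_pow]
    nlinarith
  have hqlt : ‖q‖ < ‖x‖ := lt_of_pow_lt_pow_left₀ 2 (norm_nonneg x) hqnorm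
  have : D σ' ≤ ‖q‖ := by
    have h := Metric.infDist_le_dist_of_mem (x := (0:E)) hqK'
    simpa [D] using h
  have := hσmin σ' (Finset.mem_univ _)
  rw [hD] at this
  linarith

lemma aux_rankE (r d : ℕ) [NeZero r] :
    finrank ℝ (EuclideanSpace ℝ ({s : ZMod r // s ≠ 0} × Fin d)) = (r - 1) * d := by
  have hcardsub : Fintype.card {s : ZMod r // s ≠ 0} = r - 1 := by
    have h1 : Fintype.card {s : ZMod r // ¬ s = 0} =
        Fintype.card (ZMod r) - Fintype.card {s : ZMod r // s = 0} :=
      Fintype.card_subtype_compl _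
    have h2 : Fintype.card {s : ZMod r // s = 0} = 1 := Fintype.card_subtype_eq (0 : ZMod r)
    have h3 : Fintype.card (ZMod r) = r := ZMod.card r
    simpa [h2, h3] using h1
  rw [finrank_euclideanSpace, Fintype.card_prod, hcardsub, Fintype.card_fin]

/-- Affine orbit collapsing: for `r ≥ 2`, `d ≥ 1`, `n ≥ (r-1)d`, every affine map
`[r]^{*(n+1)} → ℝ^d` (encoded by the images `p i j` of its vertices, colors in `ℤ/r`)
collapses some `ℤ/r`-orbit to a single point: there are barycentric coordinates `λ` and a
color choice `g` such that all shifts `g + t`, `t ∈ ℤ/r`, are mapped to the same point. -/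
theorem affine_orbit_collapse (r d n : ℕ) (hr : 2 ≤ r) (hd : 1 ≤ d)
    (hn : (r - 1) * d ≤ n) (p : Fin (n + 1) → ZMod r → (Fin d → ℝ)) :
    ∃ lam : Fin (n + 1) → ℝ, (∀ i, 0 ≤ lam i) ∧ (∑ i, lam i = 1) ∧
      ∃ g : Fin (n + 1) → ZMod r,
        ∀ s t : ZMod r, ∑ i, lam i • p i (g i + s) = ∑ i, lam i • p i (g i + t) := by
  classical
  haveI : NeZero r := ⟨by omega⟩
  -- the Sarkaria-style difference vectors
  set w : Fin (n + 1) → ZMod r → EuclideanSpace ℝ ({s : ZMod r // s ≠ 0} × Fin d) :=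
    fun i j => WithLp.toLp 2 (fun sk : {s : ZMod r // s ≠ 0} × Fin d => p i (j + sk.1.1) sk.2 - p i j sk.2) with hw
  set C : Fin (n + 1) → Finset (EuclideanSpace ℝ ({s : ZMod r // s ≠ 0} × Fin d)) :=
    fun i => Finset.univ.image (w i) with hCdef
  have hC : ∀ i, (0 : EuclideanSpace ℝ ({s : ZMod r // s ≠ 0} × Fin d))
      ∈ convexHull ℝ (C i : Set (EuclideanSpace ℝ ({s : ZMod r // s ≠ 0} × Fin d))) := by
    intro i
    have hsum : ∑ j : ZMod r, w i j = 0 := by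
      apply PiLp.ext
      intro sk
      have happ : (∑ j : ZMod r, w i j) sk = ∑ j : ZMod r, (w i j) sk :=
        by rw [WithLp.ofLp_sum]; exact Finset.sum_apply _ _ _
      rw [show (0 : EuclideanSpace ℝ ({s : ZMod r // s ≠ 0} × Fin d)) sk = 0 from rfl, happ]
      show ∑ j : ZMod r, (p i (j + sk.1.1) sk.2 - p i j sk.2) = 0
      rw [Finset.sum_sub_distrib, sub_eq_zero]
      exact Fintype.sum_equiv (Equiv.addRight sk.1.1) _ _ (fun j => rfl)
    have hcm : Finset.univ.centerMass (fun _ : ZMod r => (1:ℝ)) (w i) = 0 := by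
      rw [Finset.centerMass]
      simp only [one_smul]
      rw [hsum, smul_zero]
    rw [← hcm]
    apply Finset.centerMass_mem_convexHull
    · intro j _; norm_num
    · simp only [Finset.sum_const, Finset.card_univ, ZMod.card, nsmul_eq_mul, mul_one]
      exact_mod_cast Nat.pos_of_ne_zero (by omega)
    · intro j _
      exact Finset.mem_coe.mpr (Finset.mem_image_of_mem _ (Finset.mem_univ j))
  have hcard : finrank ℝ (EuclideanSpace ℝ ({s : ZMod r // s ≠ 0} × Fin d))
      < Fintype.card (Fin (n + 1)) := by
    rw [aux_rankE, Fintype.card_fin]; omega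
  obtain ⟨f, hf, h0⟩ := colorful_caratheodory hcard C hC
  choose g hg using fun i => Finset.mem_image.mp (hf i)
  have hgw : ∀ i, w i (g i) = f i := fun i => (hg i).2
  rw [convexHull_range_eq_exists_affineCombination] at h0
  obtain ⟨s, wt, hwt0, hwt1, haff⟩ := h0
  rw [affineCombination_eq_linear_combination s f wt hwt1] at haff
  set lam : Fin (n + 1) → ℝ := fun i => if i ∈ s then wt i else 0 with hlam
  have hlam0 : ∀ i, 0 ≤ lam i := by
    intro i
    by_cases h : i ∈ s
    · simpa [hlam, h] using hwt0 i h
    · simp [hlam, h]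
  have hlam1 : ∑ i, lam i = 1 := by
    simp only [hlam]
    rw [Finset.sum_ite_mem, Finset.univ_inter, hwt1]
  have hlamsum : ∑ i, lam i • f i = 0 := by
    rw [← haff]
    simp only [hlam, ite_smul, zero_smul]
    rw [Finset.sum_ite_mem, Finset.univ_inter]
  refine ⟨lam, hlam0, hlam1, g, ?_⟩
  -- key componentwise identity
  have hkey : ∀ (s' : ZMod r), s' ≠ 0 → ∀ k : Fin d,
      ∑ i, lam i * p i (g i + s') k = ∑ i, lam i * p i (g i) k := by
    intro s' hs' k
    have hpr := congrArg (fun v : EuclideanSpace ℝ ({s : ZMod r // s ≠ 0} × Fin d) =>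
      (EuclideanSpace.proj ((⟨⟨s', hs'⟩, k⟩ : {s : ZMod r // s ≠ 0} × Fin d)) :
        EuclideanSpace ℝ ({s : ZMod r // s ≠ 0} × Fin d) →L[ℝ] ℝ) v) hlamsum
    simp only [map_sum, map_smul, map_zero] at hpr
    have heval : ∀ i, (EuclideanSpace.proj ((⟨⟨s', hs'⟩, k⟩ : {s : ZMod r // s ≠ 0} × Fin d)) :
        EuclideanSpace ℝ ({s : ZMod r // s ≠ 0} × Fin d) →L[ℝ] ℝ) (f i)
        = p i (g i + s') k - p i (g i) k := by
      intro i
      rw [← hgw i]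
      rfl
    simp only [heval, smul_eq_mul, mul_sub] at hpr
    rw [Finset.sum_sub_distrib] at hpr
    linarith
  have hconst : ∀ s' : ZMod r, ∑ i, lam i • p i (g i + s') = ∑ i, lam i • p i (g i) := by
    intro s'
    by_cases hs' : s' = 0
    · simp [hs']
    · funext k
      have h1 : (∑ i, lam i • p i (g i + s')) k = ∑ i, lam i * p i (g i + s') k := by
        rw [Finset.sum_apply]
        simp [Pi.smul_apply, smul_eq_mul]
      have h2 : (∑ i, lam i • p i (g i)) k = ∑ i, lam i * p i (g i) k := by
        rw [Finset.sum_apply]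
        simp [Pi.smul_apply, smul_eq_mul]
      rw [h1, h2, hkey s' hs' k]
  intro s' t'
  rw [hconst s', hconst t']
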